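/- arXiv:1501.01492 — 5 statements merged into one kernel-verified Lean document; each statement's English description precedes it below -/
import Mathlib

section
/- Let T(x) be the formal power series satisfying T(x)/x = 1 + x*(T(x)/x)^3 with T having zero constant term and [x^1]T = 1 (the generating function of tree chord diagrams). Then for positive integers m ≤ n, the coefficient of x^n in T(x)^m equals sum_{k=0}^{m} C(m,k) * (k/(n-m)) * C(3(n-m), n-m-k) when m < n, and equals 1 when m = n. -/
theorem mulchoose (m i : ℕ) : (i+1) * m.choose (i+1) = m * (m-1).choose i := by
  cases m with
  | zero => simp
  | succ p =>
    rw [mul_comm]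
    exact (Nat.add_one_mul_choose_eq p i).symm

theorem vand (m P M : ℕ) :
    ∑ i ∈ Finset.range m, (if i ≤ P then (m-1).choose i * M.choose (P-i) else 0)
      = if 1 ≤ m then ((m-1) + M).choose P else 0 := by
  cases m with
  | zero => simp
  | succ q =>
    simp only [Nat.succ_sub_one, if_pos (Nat.succ_le_succ (Nat.zero_le q))]
    rw [Nat.add_choose_eq, Finset.Nat.sum_antidiagonal_eq_sum_range_succ
      (fun i j => q.choose i * M.choose j)]
    trans ∑ i ∈ Finset.range (max (q+1) (P+1)), (if i ≤ P then q.choose i * M.choose (P-i) else 0)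
    · apply Finset.sum_subset (Finset.range_subset_range.2 (le_max_left (q+1) (P+1)))
      intro x _ hx
      have hq : q < x := by
        by_contra h
        exact hx (Finset.mem_range.2 (Nat.lt_succ_of_le (not_lt.1 h)))
      split_ifs
      · rw [Nat.choose_eq_zero_of_lt hq, zero_mul]
      · rfl
    · rw [← Finset.sum_subset (Finset.range_subset_range.2 (le_max_right (q+1) (P+1)))
        (f := fun i => if i ≤ P then q.choose i * M.choose (P-i) else 0)]
      · apply Finset.sum_congr rfl
        intro i hi
        rw [if_pos (Nat.lt_succ_iff.1 (Finset.mem_range.1 hi))]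
      · intro x _ hx
        rw [if_neg]
        exact fun h => hx (Finset.mem_range.2 (Nat.lt_succ_of_le h))

theorem vnat (m N : ℕ) (hN : 1 ≤ N) :
    ∑ k ∈ Finset.range (m+1), (if k ≤ N then k * m.choose k * ((3*N).choose (N-k)) else 0)
      = m * (3*N + m - 1).choose (N-1) := by
  rw [Finset.sum_range_succ']
  simp only [Nat.zero_le, if_pos, Nat.mul_zero, Nat.zero_mul, zero_mul, add_zero]
  have key : ∀ i, (if i+1 ≤ N then (i+1) * m.choose (i+1) * ((3*N).choose (N-(i+1))) else 0)
      = m * (if i ≤ N-1 then ((m-1).choose i) * ((3*N).choose ((N-1)-i)) else 0) := by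
    intro i
    have hg : (i+1 ≤ N) ↔ (i ≤ N-1) := by omega
    rw [if_congr hg rfl rfl]
    split_ifs
    · rw [mulchoose, Nat.sub_sub, Nat.add_comm 1 i, mul_assoc]
    · simp
  simp only [key, ← Finset.mul_sum]
  rcases Nat.lt_or_ge m 1 with hm | hm
  · interval_cases m <;> simp
  · rw [vand m (N-1) (3*N), if_pos hm]
    congr 2
    omega

open PowerSeries

noncomputable def Bc (N m : ℕ) : ℚ :=
  if N = 0 then 1 else (m : ℚ) / N * ((3*N + m - 1).choose (N-1) : ℚ)

theorem Bsimp (N k : ℕ) (hk : k ≤ N) (hN : 1 ≤ N) :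
    Bc (N-k) (3*k) = (k : ℚ) / N * (((3*N).choose (N-k)) : ℚ) := by
  rcases Nat.eq_or_lt_of_le hk with h | h
  · subst h
    have hN0 : (k:ℚ) ≠ 0 := by
      have h9 : (0:ℚ) < k := by exact_mod_cast hN
      linarith
    simp [Bc, div_self hN0]
  · have hNk : N - k ≠ 0 := by omega
    rw [Bc, if_neg hNk]
    have hch : ((N:ℚ) - k) * ((3*N).choose (N-k) : ℚ)
        = 3 * (N:ℚ) * (((3*N-1).choose (N-k-1)) : ℚ) := by
      have h1 := mulchoose (3*N) (N-k-1)
      have he : N-k-1+1 = N-k := by omega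
      rw [he] at h1
      have h2 := congrArg (Nat.cast : ℕ → ℚ) h1
      push_cast [Nat.cast_sub hk] at h2
      linarith [h2]
    have harg : 3*(N-k) + 3*k - 1 = 3*N - 1 := by omega
    rw [harg]
    have hN0 : (N:ℚ) ≠ 0 := by positivity
    have hNk0 : ((N:ℚ) - k) ≠ 0 := by
      have : (k:ℚ) < N := by exact_mod_cast h
      linarith
    have hcast : ((3*k : ℕ) : ℚ) = 3 * k := by push_cast; ring
    have hcast2 : ((N - k : ℕ) : ℚ) = (N:ℚ) - k := by push_cast [Nat.cast_sub hk]; ring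
    rw [hcast, hcast2]
    field_simp
    linear_combination (-(k:ℚ)) * hch

theorem coeffU (u : PowerSeries ℚ) (hu : u = X * u^3 + 1) :
    ∀ N m : ℕ, coeff N (u ^ m) = Bc N m := by
  intro N
  induction N using Nat.strong_induction_on with
  | _ N ih =>
    intro m
    have hc0 : constantCoeff u = 1 := by
      conv_lhs => rw [hu]
      simp
    rcases Nat.eq_zero_or_pos N with hN | hN
    · subst hN
      rw [Bc, if_pos rfl]
      simp [coeff_zero_eq_constantCoeff, map_pow, hc0]
    · have hNne : N ≠ 0 := by omega
      have expand : u ^ m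
          = ∑ k ∈ Finset.range (m+1), X^k * u^(3*k) * (C ((m.choose k : ℕ) : ℚ)) := by
        conv_lhs => rw [hu, add_pow]
        apply Finset.sum_congr rfl
        intro k _
        rw [one_pow, mul_one, mul_pow, ← pow_mul, ← map_natCast (C (R := ℚ))]
      rw [expand, map_sum]
      have hterm : ∀ k, coeff N (X^k * u^(3*k) * C ((m.choose k : ℕ) : ℚ))
          = (if k ≤ N then ((k:ℚ)/N) * ((3*N).choose (N-k) : ℚ) else 0) * (m.choose k : ℚ) := by
        intro k
        rw [coeff_mul_C, coeff_X_pow_mul']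
        congr 1
        split_ifs with h
        · rcases Nat.eq_zero_or_pos k with hk0 | hk0
          · subst hk0
            rw [Nat.mul_zero, pow_zero, Nat.sub_zero]
            simp [coeff_one, hNne]
          · rw [ih (N-k) (by omega) (3*k), Bsimp N k h hN]
        · rfl
      simp only [hterm]
      have hsum : ∑ k ∈ Finset.range (m+1),
          (if k ≤ N then ((k:ℚ)/N) * ((3*N).choose (N-k) : ℚ) else 0) * (m.choose k : ℚ)
          = (1/(N:ℚ)) * ((∑ k ∈ Finset.range (m+1),
              (if k ≤ N then k * m.choose k * ((3*N).choose (N-k)) else 0) : ℕ) : ℚ) := by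
        push_cast
        rw [Finset.mul_sum]
        apply Finset.sum_congr rfl
        intro k _
        split_ifs
        · push_cast
          ring
        · simp
      rw [hsum, vnat m N hN, Bc, if_neg hNne]
      push_cast
      ring

/-- Let `T ∈ ℚ⟦X⟧` be the generating function of tree chord diagrams:
`T(0) = 0`, `[x^1]T = 1`, and `T/x = 1 + x (T/x)^3`, the latter encoded
equivalently (multiplying by `x`) as `X * T = X^2 + T^3`. Then for positive
integers `m ≤ n`,
`[x^n] T^m = ∑_{k=0}^{m} C(m,k) (k/(n-m)) C(3(n-m), n-m-k)` when `m < n`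
(the `k = 0` term is `0`, and binomials with negative lower index are `0`,
encoded by the `if` guard), and `[x^n] T^m = 1` when `m = n`. -/
theorem stmt4 (T : PowerSeries ℚ) (h0 : PowerSeries.constantCoeff T = 0)
    (h1 : PowerSeries.coeff 1 T = 1)
    (hT : PowerSeries.X * T = PowerSeries.X ^ 2 + T ^ 3) :
    ∀ n m : ℕ, 1 ≤ m → m ≤ n →
      (m < n →
        PowerSeries.coeff n (T ^ m)
          = ∑ k ∈ Finset.range (m + 1),
              if k ≤ n - m then
                (m.choose k : ℚ) * ((k : ℚ) / ((n : ℚ) - m))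
                  * ((3 * (n - m)).choose (n - m - k) : ℚ)
              else 0) ∧
      (m = n → PowerSeries.coeff n (T ^ m) = 1) := by
  obtain ⟨u, hTu⟩ := PowerSeries.X_dvd_iff.2 h0
  have hX2 : (X : ℚ⟦X⟧)^2 ≠ 0 := pow_ne_zero 2 PowerSeries.X_ne_zero
  have hu : u = X * u^3 + 1 := by
    have key : (X:ℚ⟦X⟧)^2 * u = X^2 * (X * u^3 + 1) := by
      have := hT
      rw [hTu] at this
      ring_nf at this ⊢
      linear_combination this
    exact mul_left_cancel₀ hX2 key
  have hcoeff : ∀ n m : ℕ, m ≤ n → PowerSeries.coeff n (T ^ m) = Bc (n-m) m := by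
    intro n m hmn
    rw [hTu, mul_pow, ← coeffU u hu (n-m) m]
    rw [coeff_X_pow_mul', if_pos hmn]
  intro n m hm hmn
  constructor
  · intro hlt
    set N := n - m with hN
    have hN1 : 1 ≤ N := by omega
    have hNQ : ((n : ℚ) - m) = (N : ℚ) := by
      rw [hN, Nat.cast_sub hmn]
    rw [hcoeff n m hmn, hNQ]
    have hsum : ∑ k ∈ Finset.range (m + 1),
        (if k ≤ N then (m.choose k : ℚ) * ((k : ℚ) / (N:ℚ)) * ((3 * N).choose (N - k) : ℚ) else 0)
        = (1/(N:ℚ)) * ((∑ k ∈ Finset.range (m+1),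
            (if k ≤ N then k * m.choose k * ((3*N).choose (N-k)) else 0) : ℕ) : ℚ) := by
      push_cast
      rw [Finset.mul_sum]
      apply Finset.sum_congr rfl
      intro k _
      split_ifs
      · ring
      · simp
    rw [hsum, vnat m N hN1, Bc, if_neg (by omega)]
    push_cast
    ring
  · intro he
    have : n - m = 0 := by omega
    rw [hcoeff n m hmn, this, Bc, if_pos rfl]
end

section
/- For positive integers n and m with m < n, (1/m) * C(2n, m-1) * sum_{k=1}^{m} C(m,k) * (k/(n-m)) * C(3(n-m), n-m-k) = (1/(n-m)) * C(2n, m-1) * C(3n-2m-1, n-m-1). -/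
lemma key14 (M N : ℕ) (hN : 1 ≤ N) :
    (∑ k ∈ Finset.Icc 1 (M+1),
      if k ≤ N then k * ((M+1).choose k) * ((3*N).choose (N - k)) else 0)
    = (M+1) * (M + 3*N).choose (N-1) := by
  have vand : (M + 3*N).choose (N-1)
      = ∑ i ∈ Finset.range N, M.choose i * (3*N).choose (N-1-i) := by
    rw [Nat.add_choose_eq, Finset.Nat.sum_antidiagonal_eq_sum_range_succ_mk]
    have h : (N - 1).succ = N := by omega
    rw [h]
  rw [vand]
  have hre : (∑ k ∈ Finset.Icc 1 (M+1),
      if k ≤ N then k * ((M+1).choose k) * ((3*N).choose (N - k)) else 0)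
    = ∑ j ∈ Finset.range (M+1),
      if j + 1 ≤ N then (j+1) * ((M+1).choose (j+1)) * ((3*N).choose (N - (j+1))) else 0 := by
    rw [show Finset.Icc 1 (M+1) = Finset.Ico 1 (M+2) by rfl, Finset.sum_Ico_eq_sum_range]
    simp [add_comm 1]
  rw [hre]
  have hterm : ∀ j, (if j + 1 ≤ N then (j+1) * ((M+1).choose (j+1)) * ((3*N).choose (N - (j+1))) else 0)
      = (M+1) * (if j + 1 ≤ N then M.choose j * ((3*N).choose (N-1-j)) else 0) := by
    intro j
    split
    · have h1 : (j+1) * ((M+1).choose (j+1)) = (M+1) * M.choose j := by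
        rw [mul_comm ((j:ℕ)+1), ← Nat.add_one_mul_choose_eq]
      have h2 : N - (j+1) = N - 1 - j := by omega
      rw [h2, h1, mul_assoc]
    · simp
  simp only [hterm, ← Finset.mul_sum]
  congr 1
  set g : ℕ → ℕ := fun i => if i + 1 ≤ N then M.choose i * (3*N).choose (N-1-i) else 0 with hg
  have e1 : ∑ i ∈ Finset.range (M+1), g i = ∑ i ∈ Finset.range (M+1+N), g i :=
    Finset.sum_subset (Finset.range_subset_range.2 (by omega))
      (fun x _ hx => by
        have hxM : ¬ x < M + 1 := fun h => hx (Finset.mem_range.mpr h)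
        simp [hg, Nat.choose_eq_zero_of_lt (show M < x by omega)])
  have e2 : ∑ i ∈ Finset.range N, g i = ∑ i ∈ Finset.range (M+1+N), g i :=
    Finset.sum_subset (Finset.range_subset_range.2 (by omega))
      (fun x _ hx => by
        have hxN : ¬ x < N := fun h => hx (Finset.mem_range.mpr h)
        simp [hg, show ¬ x + 1 ≤ N by omega, hxN])
  have e3 : ∑ i ∈ Finset.range N, g i = ∑ i ∈ Finset.range N, M.choose i * (3*N).choose (N-1-i) :=
    Finset.sum_congr rfl (fun i hi => by
      have : i + 1 ≤ N := Finset.mem_range.mp hi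
      simp [hg, this, show i < N by omega])
  rw [show (fun i => if i + 1 ≤ N then M.choose i * (3*N).choose (N-1-i) else 0) = g from rfl] at *
  calc ∑ i ∈ Finset.range (M+1), g i = ∑ i ∈ Finset.range (M+1+N), g i := e1
    _ = ∑ i ∈ Finset.range N, g i := e2.symm
    _ = _ := e3


/-- Final computation in the proof of Theorem 1: for positive integers `m < n`,
`(1/m) C(2n, m-1) ∑_{k=1}^{m} C(m,k) (k/(n-m)) C(3(n-m), n-m-k)
  = (1/(n-m)) C(2n, m-1) C(3n-2m-1, n-m-1)`,
where binomial coefficients with negative lower index are `0` (encoded by the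
`if k ≤ n - m` guard, since `ℕ`-subtraction truncates). -/
theorem stmt14 (n m : ℕ) (hm : 1 ≤ m) (hmn : m < n) :
    (1 / (m : ℚ)) * ((2 * n).choose (m - 1) : ℚ) *
      (∑ k ∈ Finset.Icc 1 m,
        if k ≤ n - m then
          (m.choose k : ℚ) * ((k : ℚ) / ((n : ℚ) - m))
            * ((3 * (n - m)).choose (n - m - k) : ℚ)
        else 0)
    = (1 / ((n : ℚ) - m)) * ((2 * n).choose (m - 1) : ℚ)
        * ((3 * n - 2 * m - 1).choose (n - m - 1) : ℚ) := by
  set N := n - m with hNdef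
  have hN1 : 1 ≤ N := by omega
  have hNn : (n : ℚ) - m = (N : ℚ) := by
    have : n = N + m := by omega
    rw [this]; push_cast; ring
  have hch : 3 * n - 2 * m - 1 = (m - 1) + 3 * N := by omega
  have hkey := key14 (m - 1) N hN1
  rw [show m - 1 + 1 = m by omega] at hkey
  have hScast : (∑ k ∈ Finset.Icc 1 m,
        if k ≤ N then (m.choose k : ℚ) * ((k : ℚ) / ((n : ℚ) - m))
            * ((3 * N).choose (N - k) : ℚ) else 0)
      = (1 / (N : ℚ)) * ((∑ k ∈ Finset.Icc 1 m,
          if k ≤ N then k * m.choose k * ((3 * N).choose (N - k)) else 0 : ℕ) : ℚ) := by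
    push_cast
    rw [Finset.mul_sum]
    refine Finset.sum_congr rfl (fun k _ => ?_)
    split
    · rw [hNn]; ring
    · simp
  rw [hNn] at hScast ⊢
  rw [hScast, hkey, hch]
  have hm0 : (m : ℚ) ≠ 0 := by positivity
  have hN0 : (N : ℚ) ≠ 0 := by positivity
  push_cast
  field_simp
end

section
/- Let T ∈ ℚ[[x]] satisfy x*T = x^2 + T^3, T(0)=0, [x]T = 1, and set R = x*T'. Then for positive integers m ≤ n, [x^n] R^m = [x^{n-m}] ((2x - T)/(x - 3T^2))^m, where (2x-T)/x and (x-3T^2)/x are power series with invertible constant terms so the quotient is well-defined. -/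
open PowerSeries

/-- Let `T ∈ ℚ⟦x⟧` satisfy `x*T = x^2 + T^3`, `T(0) = 0`, `[x]T = 1`, and set
`R = x*T'`. Write `P = (2x - T)/x` and `Q = (x - 3T^2)/x` (both well-defined
power series, encoded by `x*P = 2x - T` and `x*Q = x - 3T^2`; `Q` has constant
term `1`, hence is invertible). Then for positive integers `m ≤ n`,
`[x^n] R^m = [x^{n-m}] ((2x-T)/(x-3T^2))^m = [x^{n-m}] (P * Q⁻¹)^m`. -/
theorem stmt15 (T : PowerSeries ℚ) (h0 : PowerSeries.constantCoeff T = 0)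
    (h1 : PowerSeries.coeff 1 T = 1)
    (hT : PowerSeries.X * T = PowerSeries.X ^ 2 + T ^ 3)
    (R : PowerSeries ℚ) (hR : R = PowerSeries.X * PowerSeries.derivative ℚ T)
    (P Q : PowerSeries ℚ)
    (hP : PowerSeries.X * P = 2 * PowerSeries.X - T)
    (hQ : PowerSeries.X * Q = PowerSeries.X - 3 * T ^ 2) :
    ∀ n m : ℕ, 1 ≤ m → m ≤ n →
      PowerSeries.coeff n (R ^ m) = PowerSeries.coeff (n - m) ((P * Q⁻¹) ^ m) := by
  have hT2 : PowerSeries.coeff 1 (T ^ 2) = 0 := by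
    rw [pow_two, PowerSeries.coeff_mul, Finset.Nat.sum_antidiagonal_eq_sum_range_succ_mk]
    simp [Finset.sum_range_succ, PowerSeries.coeff_zero_eq_constantCoeff, h0]
  have hQ0 : PowerSeries.constantCoeff Q = 1 := by
    have h := congrArg (PowerSeries.coeff 1) hQ
    rw [PowerSeries.coeff_succ_X_mul, (map_ofNat (PowerSeries.C) 3).symm]
      at h
    simp [PowerSeries.coeff_C_mul, hT2, PowerSeries.coeff_zero_eq_constantCoeff] at h
    simpa [PowerSeries.coeff_zero_eq_constantCoeff] using h
  set D := PowerSeries.derivative ℚ with hD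
  have hder := congrArg D hT
  rw [Derivation.leibniz, map_add, Derivation.leibniz_pow, Derivation.leibniz_pow] at hder
  have hDX : D X = 1 := PowerSeries.derivative_X
  simp only [hDX, smul_eq_mul, nsmul_eq_mul, mul_one, pow_one, Nat.cast_ofNat] at hder
  norm_num at hder
  have key : D T * Q = P := by
    have hx : (PowerSeries.X : PowerSeries ℚ) ≠ 0 := PowerSeries.X_ne_zero
    apply mul_left_cancel₀ hx
    rw [← mul_assoc, mul_comm PowerSeries.X (D T), mul_assoc, hQ, hP]
    linear_combination hder
  have hDT : D T = P * Q⁻¹ := by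
    have hinv := PowerSeries.mul_inv_cancel Q (by rw [hQ0]; norm_num)
    calc D T = D T * (Q * Q⁻¹) := by rw [hinv, mul_one]
    _ = (D T * Q) * Q⁻¹ := by ring
    _ = P * Q⁻¹ := by rw [key]
  intro n m hm hmn
  obtain ⟨k, rfl⟩ : ∃ k, n = k + m := ⟨n - m, (Nat.sub_add_cancel hmn).symm⟩
  rw [hR, hDT, mul_pow, PowerSeries.coeff_X_pow_mul, Nat.add_sub_cancel]
end

section
/- For positive integers n, m with m < n, the number f(n,m) = (1/(n-m)) * C(2n, m-1) * C(3n-2m-1, n-m-1) is a positive integer. -/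
theorem key_dvd (n m : ℕ) (hm : 1 ≤ m) (hmn : m < n) :
    (n - m) ∣ (2*n).choose (m-1) * ((3*n - 2*m - 1).choose (n - m - 1)) := by
  set d := n - m with hd
  set A := (2*n).choose (m-1) with hA
  set B := (3*n - 2*m - 1).choose (n - m - 1) with hB
  have hd0 : d ≠ 0 := by omega
  have hBpos : 0 < B := Nat.choose_pos (by omega)
  have hApos : 0 < A := Nat.choose_pos (by omega)
  have hCpos : 0 < (2*n).choose m := Nat.choose_pos (by omega)
  -- identity 1 : B * (2*n - m) = C(K, d) * d
  have hid1 : (3*n-2*m-1).choose d * d = B * (2*n - m) := by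
    have h := Nat.choose_succ_right_eq (3*n-2*m-1) (n-m-1)
    have e1 : (n-m-1) + 1 = d := by omega
    have e2 : (3*n-2*m-1) - (n-m-1) = 2*n - m := by omega
    rw [e1, e2] at h
    exact h
  have h1 : d ∣ m * B := by
    have hdd : d ∣ (m + 2*d) * B := by
      have e : (m + 2*d) * B = d * ((3*n-2*m-1).choose d) := by
        have e3 : 2*n - m = m + 2*d := by omega
        rw [e3] at hid1
        calc (m + 2*d) * B = B * (m + 2*d) := by ring
        _ = (3*n-2*m-1).choose d * d := hid1.symm
        _ = d * ((3*n-2*m-1).choose d) := by ring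
      exact ⟨_, e⟩
    have e4 : (m + 2*d) * B = m * B + d * (2 * B) := by ring
    rw [e4] at hdd
    have : m * B = (m * B + d * (2*B)) - d * (2*B) := by omega
    rw [this]
    exact Nat.dvd_sub hdd (Dvd.intro _ rfl)
  -- identity 2 : C(2n, m) * m = A * (2n - m + 1)
  have hid2 : (2*n).choose m * m = A * (2*n - m + 1) := by
    have h := Nat.choose_succ_right_eq (2*n) (m-1)
    have e1 : (m-1) + 1 = m := by omega
    have e2 : (2*n) - (m-1) = 2*n - m + 1 := by omega
    rw [e1, e2] at h
    exact h
  rw [← Nat.factorization_le_iff_dvd hd0 (by positivity)]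
  rw [Finsupp.le_def]
  intro p
  by_cases hp : p.Prime
  · rw [Nat.factorization_mul hApos.ne' hBpos.ne']
    simp only [Finsupp.coe_add, Pi.add_apply]
    have hmB : d.factorization p ≤ m.factorization p + B.factorization p := by
      have := (Nat.factorization_le_iff_dvd hd0 (by positivity)).2 h1
      have h2 := this p
      rwa [Nat.factorization_mul (by omega) hBpos.ne'] at h2
    by_cases hpd : p ∣ d
    · by_cases hpm : p ∣ m
      · -- v_p(A) ≥ v_p(m)
        have hp2nm : p ∣ 2*n - m := by
          have : 2*n - m = m + 2*d := by omega
          rw [this]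
          exact Nat.dvd_add hpm (Dvd.dvd.mul_left hpd 2)
        have hnot : ¬ p ∣ (2*n - m + 1) := by
          intro hcon
          have := Nat.dvd_sub hcon hp2nm
          simp at this
          exact hp.ne_one this
        have hv0 : (2*n - m + 1).factorization p = 0 :=
          Nat.factorization_eq_zero_of_not_dvd hnot
        have hfid : ((2*n).choose m).factorization p + m.factorization p
            = A.factorization p + (2*n - m + 1).factorization p := by
          have := congrArg (fun x => x.factorization p) hid2
          simpa [Nat.factorization_mul hCpos.ne' (by omega : m ≠ 0),
            Nat.factorization_mul hApos.ne' (by omega : 2*n - m + 1 ≠ 0)] using this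
        have hmA : m.factorization p ≤ A.factorization p := by omega
        omega
      · have : m.factorization p = 0 := Nat.factorization_eq_zero_of_not_dvd hpm
        omega
    · have : d.factorization p = 0 := by
        rw [Nat.factorization_eq_zero_iff]
        right; left; exact hpd
      omega
  · have : d.factorization p = 0 := Nat.factorization_eq_zero_of_not_prime d hp
    omega

/-- For positive integers `m < n`, the number
`f(n,m) = (1/(n-m)) * C(2n, m-1) * C(3n-2m-1, n-m-1)` is a positive integer. -/
theorem stmt16 (n m : ℕ) (hm : 1 ≤ m) (hmn : m < n) :
    ∃ N : ℕ, 0 < N ∧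
      (N : ℚ) = (1 / ((n : ℚ) - m)) * ((2 * n).choose (m - 1) : ℚ)
          * ((3 * n - 2 * m - 1).choose (n - m - 1) : ℚ) := by
  have hdvd := key_dvd n m hm hmn
  set A := (2*n).choose (m-1) with hA
  set B := (3*n - 2*m - 1).choose (n - m - 1) with hB
  have hBpos : 0 < B := Nat.choose_pos (by omega)
  have hApos : 0 < A := Nat.choose_pos (by omega)
  refine ⟨(A * B) / (n - m), ?_, ?_⟩
  · exact Nat.div_pos (Nat.le_of_dvd (by positivity) hdvd) (by omega)
  · have h := Nat.div_mul_cancel hdvd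
    have hc : ((n:ℚ) - m) = ((n - m : ℕ) : ℚ) := by
      rw [Nat.cast_sub hmn.le]
    rw [hc]
    have hdq : ((n - m : ℕ) : ℚ) ≠ 0 := by
      simp; omega
    field_simp
    exact_mod_cast h
end

section
/- Let z ∈ ℚ[[x]] with z(0)=0 satisfy z = x(1+z)^3. Then for every k ≥ 1 and n > k, the coefficient of x^n in z^k equals (k/n) * [u^{n-k}] (1+u)^{3n}, i.e., (k/n) * C(3n, n-k). -/
open PowerSeries

lemma vand_range (a b m : ℕ) :
    (a + b).choose m = ∑ i ∈ Finset.range (m + 1), a.choose i * b.choose (m - i) := by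
  rw [Nat.add_choose_eq, Finset.Nat.sum_antidiagonal_eq_sum_range_succ_mk]

lemma weighted_vand (a b m : ℕ) :
    ∑ j ∈ Finset.range (m + 2), j * (a + 1).choose j * b.choose (m + 1 - j)
      = (a + 1) * (a + b).choose m := by
  rw [Finset.sum_range_succ']
  have h : ∀ i, (i + 1) * (a + 1).choose (i + 1) * b.choose (m + 1 - (i + 1))
      = (a + 1) * (a.choose i * b.choose (m - i)) := by
    intro i
    have := Nat.add_one_mul_choose_eq a i
    rw [Nat.succ_sub_succ, ← mul_assoc, this]
    ring
  simp only [h]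
  rw [← Finset.mul_sum, ← vand_range]
  simp

lemma final_id (m k : ℕ) (hm : 1 ≤ m) (hk : 1 ≤ k) :
    ∑ j ∈ Finset.range (m + 1),
        ((3 * k).choose j : ℚ) * ((j : ℚ) / (m : ℚ) * ((3 * m).choose (m - j) : ℚ))
      = ((k : ℚ) / ((m + k : ℕ) : ℚ)) * (((3 * (m + k)).choose m : ℕ) : ℚ) := by
  obtain ⟨m', rfl⟩ : ∃ m', m = m' + 1 := ⟨m - 1, by omega⟩
  obtain ⟨k', rfl⟩ : ∃ k', k = k' + 1 := ⟨k - 1, by omega⟩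
  set m := m' + 1
  set k := k' + 1
  have hS := weighted_vand (3 * k' + 2) (3 * m) m'
  have h3k : 3 * k' + 2 + 1 = 3 * k := by omega
  rw [h3k] at hS
  -- hS : ∑ j ∈ range (m'+2), j * (3k).choose j * (3m).choose (m'+1-j) = 3k * (3k'+2+3m).choose m'
  have hL : ∑ j ∈ Finset.range (m + 1),
      ((3 * k).choose j : ℚ) * ((j : ℚ) / (m : ℚ) * ((3 * m).choose (m - j) : ℚ))
      = ((∑ j ∈ Finset.range (m' + 2), j * (3 * k).choose j * (3 * m).choose (m' + 1 - j) : ℕ) : ℚ) / (m : ℚ) := by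
    push_cast
    rw [Finset.sum_div]
    refine Finset.sum_congr rfl fun j hj => ?_
    ring
  rw [hL, hS]
  have hN : 3 * k' + 2 + 3 * m + 1 = 3 * (m + k) := by omega
  have h2 := Nat.add_one_mul_choose_eq (3 * k' + 2 + 3 * m) m'
  rw [hN] at h2
  have h2' : ((3 * (m + k) : ℕ) : ℚ) * ((3 * k' + 2 + 3 * m).choose m' : ℚ)
      = ((3 * (m + k)).choose m : ℚ) * (m : ℚ) := by exact_mod_cast congrArg (Nat.cast (R := ℚ)) h2
  have hm0 : (m : ℚ) ≠ 0 := by positivity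
  have hn0 : ((m + k : ℕ) : ℚ) ≠ 0 := by positivity
  push_cast at h2' ⊢
  field_simp
  ring_nf
  ring_nf at h2'
  nlinarith [h2']

/-- Lagrange inversion for the ternary-tree equation: let `z ∈ ℚ⟦x⟧` with
`z(0) = 0` satisfy `z = x(1+z)^3`. Then for `k ≥ 1` and `n > k`,
`[x^n] z^k = (k/n) * C(3n, n-k)`. -/
theorem stmt18 (z : PowerSeries ℚ) (h0 : PowerSeries.constantCoeff z = 0)
    (hz : z = PowerSeries.X * (1 + z) ^ 3) :
    ∀ k n : ℕ, 1 ≤ k → k < n →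
      PowerSeries.coeff n (z ^ k)
        = ((k : ℚ) / (n : ℚ)) * ((3 * n).choose (n - k) : ℚ) := by
  have hXdvd : (X : ℚ⟦X⟧) ∣ z := ⟨(1 + z) ^ 3, hz⟩
  have hzero : ∀ m j : ℕ, m < j → coeff m (z ^ j) = 0 := fun m j h =>
    (X_pow_dvd_iff.mp (pow_dvd_pow_of_dvd hXdvd j)) m h
  have hpow : ∀ k : ℕ, z ^ k = X ^ k * (1 + z) ^ (3 * k) := by
    intro k
    conv_lhs => rw [hz]
    rw [mul_pow, pow_mul]
  have key : ∀ m : ℕ, ∀ k : ℕ, 1 ≤ k →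
      coeff (m + k) (z ^ k)
        = ((k : ℚ) / ((m + k : ℕ) : ℚ)) * (((3 * (m + k)).choose m : ℕ) : ℚ) := by
    intro m
    induction m using Nat.strong_induction_on with
    | _ m ih =>
      intro k hk
      have hcoeff : coeff (m + k) (z ^ k)
          = ∑ j ∈ Finset.range (3 * k + 1), ((3 * k).choose j : ℚ) * coeff m (z ^ j) := by
        rw [hpow k, coeff_X_pow_mul, show (1 : ℚ⟦X⟧) + z = z + 1 from add_comm _ _, add_pow]
        rw [map_sum]
        refine Finset.sum_congr rfl fun j hj => ?_
        rw [one_pow, mul_one, show (((3 * k).choose j : ℕ) : ℚ⟦X⟧) = C (((3 * k).choose j : ℕ) : ℚ) by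
          push_cast; rfl, coeff_mul_C]
        ring
      rcases Nat.eq_zero_or_pos m with hm | hm
      · subst hm
        rw [hcoeff]
        rw [Finset.sum_eq_single 0]
        · have hk0 : (k : ℚ) ≠ 0 := Nat.cast_ne_zero.mpr (by omega)
          simp [hk0]
        · intro j hj hj0
          rw [hzero 0 j (Nat.pos_of_ne_zero hj0)]
          ring
        · simp
      · have hext : ∑ j ∈ Finset.range (3 * k + 1), ((3 * k).choose j : ℚ) * coeff m (z ^ j)
            = ∑ j ∈ Finset.range (m + 1), ((3 * k).choose j : ℚ) * coeff m (z ^ j) := by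
          have h1 : ∑ j ∈ Finset.range (3 * k + 1), ((3 * k).choose j : ℚ) * coeff m (z ^ j)
              = ∑ j ∈ Finset.range (3 * k + m + 1), ((3 * k).choose j : ℚ) * coeff m (z ^ j) := by
            refine Finset.sum_subset (by intro x hx; simp at hx ⊢; omega) ?_
            intro j hj hj'
            simp only [Finset.mem_range, not_lt] at hj'
            rw [Nat.choose_eq_zero_of_lt (by omega)]
            simp
          have h2 : ∑ j ∈ Finset.range (m + 1), ((3 * k).choose j : ℚ) * coeff m (z ^ j)
              = ∑ j ∈ Finset.range (3 * k + m + 1), ((3 * k).choose j : ℚ) * coeff m (z ^ j) := by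
            refine Finset.sum_subset (by intro x hx; simp at hx ⊢; omega) ?_
            intro j hj hj'
            simp only [Finset.mem_range, not_lt] at hj'
            rw [hzero m j (by omega)]
            ring
          rw [h1, ← h2]
        have hval : ∀ j ∈ Finset.range (m + 1), ((3 * k).choose j : ℚ) * coeff m (z ^ j)
            = ((3 * k).choose j : ℚ) * ((j : ℚ) / (m : ℚ) * ((3 * m).choose (m - j) : ℚ)) := by
          intro j hj
          simp only [Finset.mem_range] at hj
          rcases Nat.eq_zero_or_pos j with hj0 | hj0
          · subst hj0
            simp [PowerSeries.coeff_one, hm.ne']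
          · have hmj : m - j + j = m := by omega
            have := ih (m - j) (by omega) j hj0
            rw [hmj] at this
            rw [this]
        rw [hcoeff, hext, Finset.sum_congr rfl hval, final_id m k hm hk]
  intro k n hk hkn
  have h := key (n - k) k hk
  rw [Nat.sub_add_cancel hkn.le] at h
  exact h
end
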